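/- arXiv:1307.4156 — 2 statements merged into one kernel-verified Lean document; each statement's English description precedes it below -/
import Mathlib

section
/- Let 0 < λ'' < λ' < λ_max, let θ*(λ') be the Euclidean projection of Y/λ' onto the dual feasible set ℱ (which contains 0), and set a = (1/2)(Y/λ'' − θ*(λ')) and b = Y/λ' − θ*(λ'). Then ⟨a, b⟩ ≥ 0. -/
open scoped ENNReal BigOperators
open Matrix

/-- The vector ℓq norm for q ∈ [1,∞]. -/
noncomputable def lqNorm {n : ℕ} (q : ℝ≥0∞) (x : Fin n → ℝ) : ℝ :=
  if q = ⊤ then ⨆ i, |x i| else (∑ i, |x i| ^ q.toReal) ^ (1 / q.toReal)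

lemma lqNorm_smul {n : ℕ} (qb : ℝ≥0∞) (hqb : qb ≠ ⊤ → qb.toReal ≠ 0)
    (t : ℝ) (ht : 0 ≤ t) (x : Fin n → ℝ) :
    lqNorm qb (fun i => t * x i) = t * lqNorm qb x := by
  unfold lqNorm
  by_cases h : qb = ⊤
  · simp only [h, if_pos]
    rw [Real.mul_iSup_of_nonneg ht]
    congr 1; funext i; rw [abs_mul, abs_of_nonneg ht]
  · simp only [h, if_neg, if_false]
    have hr : qb.toReal ≠ 0 := hqb h
    have e1 : ∀ i : Fin n, |t * x i| ^ qb.toReal = t ^ qb.toReal * |x i| ^ qb.toReal := by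
      intro i; rw [abs_mul, abs_of_nonneg ht, Real.mul_rpow ht (abs_nonneg _)]
    rw [Finset.sum_congr rfl (fun i _ => e1 i), ← Finset.mul_sum,
      Real.mul_rpow (Real.rpow_nonneg ht _) (Finset.sum_nonneg fun i _ =>
        Real.rpow_nonneg (abs_nonneg _) _),
      ← Real.rpow_mul ht, mul_one_div_cancel hr, Real.rpow_one]

/-- Let `0 < λ'' < λ' < λ_max`, let `θ*(λ')` be the Euclidean projection of
`Y/λ'` onto the dual feasible set `ℱ = {θ : ‖Bᵢᵀθ‖_{q̄} ≤ 1 ∀i}`, and set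
`a = (1/2)(Y/λ'' − θ*(λ'))` and `b = Y/λ' − θ*(λ')`.  Then `⟨a, b⟩ ≥ 0`. -/
theorem stmt14 {m s : ℕ} [NeZero s] (p : Fin s → ℕ)
    (B : (i : Fin s) → Matrix (Fin m) (Fin (p i)) ℝ) (Y : Fin m → ℝ)
    (q qb : ℝ≥0∞) (hq : 1 ≤ q) (hconj : 1 / q + 1 / qb = 1)
    (lam' lam'' : ℝ) (h0 : 0 < lam'') (h1 : lam'' < lam')
    (h2 : lam' < Finset.univ.sup' Finset.univ_nonempty
        (fun i => lqNorm qb ((B i)ᵀ.mulVec Y)))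
    (θp : Fin m → ℝ)
    (hθpF : ∀ i, lqNorm qb ((B i)ᵀ.mulVec θp) ≤ 1)
    (hθpProj : ∀ θ : Fin m → ℝ, (∀ i, lqNorm qb ((B i)ᵀ.mulVec θ) ≤ 1) →
      ∑ k, (Y k / lam' - θp k) ^ 2 ≤ ∑ k, (Y k / lam' - θ k) ^ 2) :
    0 ≤ ∑ k, (1 / 2 * (Y k / lam'' - θp k)) * (Y k / lam' - θp k) := by
  have hqb0 : qb ≠ 0 := by
    intro h; rw [h] at hconj; simp at hconj
  have hqbR : qb ≠ ⊤ → qb.toReal ≠ 0 := fun h => ENNReal.toReal_ne_zero.mpr ⟨hqb0, h⟩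
  set N : ℝ := ∑ k, θp k ^ 2 with hN_def
  set I : ℝ := ∑ k, (Y k / lam') * θp k with hI_def
  have hN : 0 ≤ N := Finset.sum_nonneg fun k _ => sq_nonneg _
  have key : ∀ t : ℝ, 0 ≤ t → t ≤ 1 → (1 - t ^ 2) * N ≤ 2 * (1 - t) * I := by
    intro t ht0 ht1
    have hfeas : ∀ i, lqNorm qb ((B i)ᵀ.mulVec (t • θp)) ≤ 1 := by
      intro i
      rw [Matrix.mulVec_smul]
      have e : (t • (B i)ᵀ.mulVec θp) = fun j => t * ((B i)ᵀ.mulVec θp j) := rfl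
      rw [e, lqNorm_smul qb hqbR t ht0]
      nlinarith [hθpF i, mul_nonneg ht0 (sub_nonneg.mpr (hθpF i))]
    have h := hθpProj (t • θp) hfeas
    have e : ∑ k, (Y k / lam' - (t • θp) k) ^ 2
        = ∑ k, (Y k / lam' - θp k) ^ 2 + (2 * (1 - t) * I + (t ^ 2 - 1) * N) := by
      simp only [Pi.smul_apply, smul_eq_mul]
      have e1 : ∀ k : Fin m, (Y k / lam' - t * θp k) ^ 2
          = (Y k / lam' - θp k) ^ 2 + (2 * (1 - t) * ((Y k / lam') * θp k)
            + (t ^ 2 - 1) * θp k ^ 2) := by intro k; ring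
      rw [Finset.sum_congr rfl (fun k _ => e1 k), Finset.sum_add_distrib,
        Finset.sum_add_distrib, ← Finset.mul_sum, ← Finset.mul_sum]
    rw [e] at h
    linarith
  have hI0 : 0 ≤ I := by have := key 0 le_rfl zero_le_one; linarith
  have hNI : N ≤ I := by
    by_contra hc
    push_neg at hc
    have hNpos : 0 < N := lt_of_le_of_lt hI0 hc
    set t : ℝ := I / N with ht_def
    have ht0 : 0 ≤ t := div_nonneg hI0 hN
    have ht1 : t ≤ 1 := (div_le_one hNpos).mpr hc.le
    have hk := key t ht0 ht1
    have htN : t * N = I := div_mul_cancel₀ I (ne_of_gt hNpos)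
    nlinarith [mul_nonneg hNpos.le (sq_nonneg (1 - t)), htN, hk]
  have hlam' : lam' ≠ 0 := ne_of_gt (h0.trans h1)
  have hlam'' : lam'' ≠ 0 := ne_of_gt h0
  set c : ℝ := lam' / lam'' with hc_def
  have hc1 : 1 < c := (one_lt_div h0).mpr h1
  have hYk : ∀ k, Y k / lam'' = c * (Y k / lam') := by
    intro k; rw [hc_def]; field_simp
  have e2 : ∀ k : Fin m, (1 / 2 * (Y k / lam'' - θp k)) * (Y k / lam' - θp k)
      = c / 2 * (Y k / lam' - θp k) ^ 2
        + (c - 1) / 2 * ((Y k / lam') * θp k - θp k ^ 2) := by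
    intro k; rw [hYk k]; ring
  rw [Finset.sum_congr rfl (fun k _ => e2 k), Finset.sum_add_distrib,
    ← Finset.mul_sum, ← Finset.mul_sum, Finset.sum_sub_distrib]
  have hB : 0 ≤ ∑ k, (Y k / lam' - θp k) ^ 2 := Finset.sum_nonneg fun k _ => sq_nonneg _
  have : (0:ℝ) ≤ (c - 1) / 2 * (I - N) := by
    apply mul_nonneg (by linarith) (by linarith)
  nlinarith [mul_nonneg (by linarith : (0:ℝ) ≤ c / 2) hB]
end

section
/- Let W* = (w*₁,…,w*_s) be a minimizer of the primal objective f(W) = (1/2)‖Y − Σᵢ Bᵢwᵢ‖₂² + λΣᵢ‖wᵢ‖_q. If ‖Bᵢᵀ(Y − Σⱼ Bⱼw*ⱼ)‖_{q̄} < λ for some group index i, then w*ᵢ = 0. -/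
open scoped ENNReal BigOperators
open Matrix

lemma lqNorm_nonneg {n : ℕ} (q : ℝ≥0∞) (x : Fin n → ℝ) : 0 ≤ lqNorm q x := by
  unfold lqNorm
  split_ifs
  · exact Real.iSup_nonneg fun i => abs_nonneg _
  · exact Real.rpow_nonneg (Finset.sum_nonneg fun i _ => Real.rpow_nonneg (abs_nonneg _) _) _

lemma toReal_one_le {q : ℝ≥0∞} (hq : 1 ≤ q) (hqt : q ≠ ⊤) : 1 ≤ q.toReal := by
  have := ENNReal.toReal_mono hqt hq
  simpa using this

lemma lqNorm_smul_s18 {n : ℕ} {q : ℝ≥0∞} (hq : 1 ≤ q) {a : ℝ} (ha : 0 ≤ a) (x : Fin n → ℝ) :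
    lqNorm q (fun l => a * x l) = a * lqNorm q x := by
  unfold lqNorm
  split_ifs with hqt
  · rw [Real.mul_iSup_of_nonneg ha]
    congr 1; ext l; rw [abs_mul, abs_of_nonneg ha]
  · have ht : 1 ≤ q.toReal := toReal_one_le hq hqt
    have ht0 : q.toReal ≠ 0 := by linarith
    have : ∀ l : Fin n, |a * x l| ^ q.toReal = a ^ q.toReal * |x l| ^ q.toReal := by
      intro l
      rw [abs_mul, abs_of_nonneg ha, Real.mul_rpow ha (abs_nonneg _)]
    rw [Finset.sum_congr rfl (fun l _ => this l), ← Finset.mul_sum,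
      Real.mul_rpow (Real.rpow_nonneg ha _)
        (Finset.sum_nonneg fun i _ => Real.rpow_nonneg (abs_nonneg _) _),
      ← Real.rpow_mul ha, mul_one_div, div_self ht0, Real.rpow_one]

lemma lqNorm_pos {n : ℕ} {q : ℝ≥0∞} (hq : 1 ≤ q) {x : Fin n → ℝ} (hx : x ≠ 0) :
    0 < lqNorm q x := by
  obtain ⟨l, hl⟩ := Function.ne_iff.mp hx
  have hal : 0 < |x l| := abs_pos.mpr hl
  unfold lqNorm
  split_ifs with hqt
  · exact lt_of_lt_of_le hal (le_ciSup (f := fun i => |x i|) (Finite.bddAbove_range _) l)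
  · have ht : 1 ≤ q.toReal := toReal_one_le hq hqt
    apply Real.rpow_pos_of_pos
    calc (0:ℝ) < |x l| ^ q.toReal := Real.rpow_pos_of_pos hal _
    _ ≤ _ := Finset.single_le_sum (fun i _ => Real.rpow_nonneg (abs_nonneg _) _) (Finset.mem_univ l)

lemma lqNorm_holder {n : ℕ} {q qb : ℝ≥0∞} (hq : 1 ≤ q) (hconj : 1 / q + 1 / qb = 1)
    (u w : Fin n → ℝ) : ∑ l, u l * w l ≤ lqNorm qb u * lqNorm q w := by
  simp only [one_div] at hconj
  rcases eq_or_ne q 1 with rfl | hq1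
  · -- q = 1, qb = ⊤
    have hqb : qb = ⊤ := by
      have h1 : (1:ℝ≥0∞) + qb⁻¹ = 1 + 0 := by simpa using hconj
      exact ENNReal.inv_eq_zero.mp ((ENNReal.add_right_inj (by simp)).mp h1)
    subst hqb
    simp only [lqNorm, if_pos rfl, if_neg (by simp : (1:ℝ≥0∞) ≠ ⊤), ENNReal.toReal_one,
      Real.rpow_one, div_one]
    calc ∑ l, u l * w l ≤ ∑ l, (⨆ i, |u i|) * |w l| := by
          apply Finset.sum_le_sum
          intro l _
          calc u l * w l ≤ |u l * w l| := le_abs_self _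
          _ = |u l| * |w l| := abs_mul _ _
          _ ≤ (⨆ i, |u i|) * |w l| :=
            mul_le_mul_of_nonneg_right
              (le_ciSup (f := fun i => |u i|) (Finite.bddAbove_range _) l) (abs_nonneg _)
    _ = (⨆ i, |u i|) * ∑ l, |w l| := by rw [← Finset.mul_sum]
  rcases eq_or_ne q ⊤ with rfl | hqtop
  · -- q = ⊤, qb = 1
    have hqb : qb = 1 := by
      rw [ENNReal.inv_top, zero_add] at hconj
      exact ENNReal.inv_eq_one.mp hconj
    subst hqb
    simp only [lqNorm, if_pos rfl, if_neg (by simp : (1:ℝ≥0∞) ≠ ⊤), ENNReal.toReal_one,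
      Real.rpow_one, div_one]
    calc ∑ l, u l * w l ≤ ∑ l, |u l| * (⨆ i, |w i|) := by
          apply Finset.sum_le_sum
          intro l _
          calc u l * w l ≤ |u l * w l| := le_abs_self _
          _ = |u l| * |w l| := abs_mul _ _
          _ ≤ |u l| * (⨆ i, |w i|) :=
            mul_le_mul_of_nonneg_left
              (le_ciSup (f := fun i => |w i|) (Finite.bddAbove_range _) l) (abs_nonneg _)
    _ = (∑ l, |u l|) * (⨆ i, |w i|) := by rw [← Finset.sum_mul]
  · -- 1 < q < ⊤
    have hq1' : 1 < q := lt_of_le_of_ne hq (Ne.symm hq1)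
    have hqinv1 : q⁻¹ < 1 := ENNReal.inv_lt_one.mpr hq1'
    have hqinv0 : q⁻¹ ≠ ⊤ := ENNReal.inv_ne_top.mpr (zero_lt_one.trans_le hq).ne'
    have hqbinv : qb⁻¹ = 1 - q⁻¹ := ENNReal.eq_sub_of_add_eq hqinv0 (by rw [add_comm]; exact hconj)
    have hqbinv0 : qb⁻¹ ≠ 0 := by
      rw [hqbinv]
      exact (tsub_pos_of_lt hqinv1).ne'
    have hqbtop : qb ≠ ⊤ := fun h => hqbinv0 (by simp [h])
    have hqbinvlt : qb⁻¹ < 1 := by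
      rw [hqbinv]
      exact ENNReal.sub_lt_self ENNReal.one_ne_top one_ne_zero (ENNReal.inv_ne_zero.mpr hqtop)
    have hqb1 : 1 < qb := ENNReal.inv_lt_one.mp hqbinvlt
    have hqbinvtop : qb⁻¹ ≠ ⊤ := ENNReal.inv_ne_top.mpr (zero_lt_one.trans hqb1).ne'
    -- real conjugate exponents
    have hreal : (q.toReal).HolderConjugate (qb.toReal) := by
      rw [Real.holderConjugate_iff]
      constructor
      · exact (ENNReal.toReal_lt_toReal (by simp) hqtop).mpr hq1'
      · have h2 := congrArg ENNReal.toReal hconj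
        rw [ENNReal.toReal_add hqinv0 hqbinvtop,
          ENNReal.toReal_inv, ENNReal.toReal_inv, ENNReal.toReal_one] at h2
        exact h2
    have h3 := Real.inner_le_Lp_mul_Lq (Finset.univ) u w hreal.symm
    simp only [lqNorm, if_neg hqtop, if_neg hqbtop]
    exact h3

/-- Let `W* = (w*₁,…,w*_s)` be a minimizer of
`f(W) = (1/2)‖Y − Σᵢ Bᵢwᵢ‖₂² + λΣᵢ‖wᵢ‖_q`.  If
`‖Bᵢᵀ(Y − Σⱼ Bⱼw*ⱼ)‖_{q̄} < λ` for some group index `i`, then `w*ᵢ = 0`. -/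
theorem stmt18 {m s : ℕ} (p : Fin s → ℕ)
    (B : (i : Fin s) → Matrix (Fin m) (Fin (p i)) ℝ) (Y : Fin m → ℝ)
    (lam : ℝ) (hlam : 0 < lam) (q qb : ℝ≥0∞) (hq : 1 ≤ q)
    (hconj : 1 / q + 1 / qb = 1)
    (W : (i : Fin s) → Fin (p i) → ℝ)
    (hW : ∀ W' : (i : Fin s) → Fin (p i) → ℝ,
      (1 / 2) * ∑ k, (Y k - ∑ i, (B i).mulVec (W i) k) ^ 2 +
          lam * ∑ i, lqNorm q (W i) ≤
        (1 / 2) * ∑ k, (Y k - ∑ i, (B i).mulVec (W' i) k) ^ 2 +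
          lam * ∑ i, lqNorm q (W' i))
    (i : Fin s)
    (hscr : lqNorm qb
        ((B i)ᵀ.mulVec (fun k => Y k - ∑ j, (B j).mulVec (W j) k)) < lam) :
    W i = 0 := by
  by_contra hne
  set r : Fin m → ℝ := fun k => Y k - ∑ j, (B j).mulVec (W j) k with hr
  set v : Fin m → ℝ := (B i).mulVec (W i) with hv
  set u : Fin (p i) → ℝ := (B i)ᵀ.mulVec r with hu
  set N : ℝ := lqNorm q (W i) with hNdef
  have hN : 0 < N := lqNorm_pos hq hne
  set R : ℝ := ∑ k, r k * v k with hR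
  set C : ℝ := ∑ k, v k ^ 2 with hC
  have hC0 : 0 ≤ C := Finset.sum_nonneg fun k _ => sq_nonneg _
  -- the dot product identity
  have hdot : R = ∑ l, u l * W i l := by
    simp only [hR, hu, hv, Matrix.mulVec, dotProduct, Matrix.transpose_apply,
      Finset.mul_sum, Finset.sum_mul]
    rw [Finset.sum_comm]
    apply Finset.sum_congr rfl
    intro l _
    apply Finset.sum_congr rfl
    intro k _
    ring
  -- key inequality for small t
  have key : ∀ t : ℝ, 0 < t → t ≤ 1 → lam * N ≤ R + t / 2 * C := by
    intro t ht ht1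
    set W' : (j : Fin s) → Fin (p j) → ℝ :=
      Function.update W i (fun l => (1 - t) * W i l) with hW'
    have hWi : W' i = fun l => (1 - t) * W i l := Function.update_self _ _ _
    have hWj : ∀ j, j ≠ i → W' j = W j := fun j hj => Function.update_of_ne hj _ _
    have hres : ∀ k, Y k - ∑ j, (B j).mulVec (W' j) k = r k + t * v k := by
      intro k
      have hterm : ∀ j, (B j).mulVec (W' j) k
          = (B j).mulVec (W j) k - (if j = i then t * v k else 0) := by
        intro j
        rcases eq_or_ne j i with rfl | hj
        · rw [if_pos rfl, hWi]
          have : (fun l => (1 - t) * W j l) = (1 - t) • (W j) := by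
            funext l; simp [smul_eq_mul]
          rw [this, Matrix.mulVec_smul]
          simp [hv, smul_eq_mul]
          ring
        · rw [hWj j hj, if_neg hj, sub_zero]
      rw [Finset.sum_congr rfl fun j _ => hterm j]
      rw [Finset.sum_sub_distrib, Finset.sum_ite_eq' Finset.univ i fun _ => t * v k]
      simp [hr]
      ring
    have hpen : ∑ j, lqNorm q (W' j) = (∑ j, lqNorm q (W j)) - t * N := by
      have hterm : ∀ j, lqNorm q (W' j)
          = lqNorm q (W j) - (if j = i then t * N else 0) := by
        intro j
        rcases eq_or_ne j i with rfl | hj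
        · rw [if_pos rfl, hWi, lqNorm_smul_s18 hq (by linarith)]
          ring
        · rw [hWj j hj, if_neg hj, sub_zero]
      rw [Finset.sum_congr rfl fun j _ => hterm j]
      rw [Finset.sum_sub_distrib, Finset.sum_ite_eq' Finset.univ i fun _ => t * N]
      simp
    have h := hW W'
    simp only [hres, hpen] at h
    have hexp : ∑ k, (r k + t * v k) ^ 2 = (∑ k, r k ^ 2) + 2 * t * R + t ^ 2 * C := by
      simp only [hR, hC, Finset.mul_sum, ← Finset.sum_add_distrib]
      apply Finset.sum_congr rfl
      intro k _
      ring
    rw [hexp] at h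
    have hrr : ∑ k, (Y k - ∑ j, (B j).mulVec (W j) k) ^ 2 = ∑ k, r k ^ 2 := rfl
    rw [hrr] at h
    nlinarith [h, sq_nonneg t]
  -- conclude lam * N ≤ R
  have hRN : lam * N ≤ R := by
    apply le_of_forall_pos_le_add
    intro ε hε
    have htpos : 0 < min 1 (2 * ε / (C + 1)) := by positivity
    have ht1 : min 1 (2 * ε / (C + 1)) ≤ 1 := min_le_left _ _
    have h := key _ htpos ht1
    have h2 : min 1 (2 * ε / (C + 1)) / 2 * C ≤ ε := by
      have hle : min 1 (2 * ε / (C + 1)) ≤ 2 * ε / (C + 1) := min_le_right _ _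
      have hC1 : (0:ℝ) < C + 1 := by linarith
      have h3 : min 1 (2 * ε / (C + 1)) * (C + 1) ≤ 2 * ε := (le_div_iff₀ hC1).mp hle
      nlinarith [h3, htpos.le, hC0]
    linarith
  have hRle : R ≤ lqNorm qb u * N := by
    rw [hdot]
    exact lqNorm_holder hq hconj u (W i)
  have : lqNorm qb u * N < lam * N := by
    apply mul_lt_mul_of_pos_right _ hN
    exact hscr
  linarith
end
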